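/- Let $X \in \mathbb{R}^{n\times p}$ with $\Xi_X = X^T X - I_p$, $E \in \mathbb{R}^{n\times p}$ with $X^T E$ skew-symmetric, $W = -(I_n - XX^T)E$, $J = I_p + \frac{\tau^2}{4}W^T W + \frac{\tau}{2}X^T E$, and $Y = X(2J^{-1} - I_p) + \tau W J^{-1}$. Then $X^T W = \Xi_X X^T E$ and $\Xi_Y := Y^T Y - I_p$ satisfies $\|\Xi_Y\|_F \leq (1 + 2\tau\|X^T E\|_F)\|\Xi_X\|_F$. -/

import Mathlib

open Matrix

/-- Frobenius norm of a real matrix. -/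
noncomputable def frob {n p : ℕ} (A : Matrix (Fin n) (Fin p) ℝ) : ℝ :=
  Real.sqrt (Matrix.trace (Aᵀ * A))

attribute [local instance] Matrix.frobeniusSeminormedAddCommGroup

lemma frob_eq_norm {n p : ℕ} (A : Matrix (Fin n) (Fin p) ℝ) : frob A = ‖A‖ := by
  rw [frob, Matrix.frobenius_norm_def, Real.sqrt_eq_rpow]
  congr 1
  rw [Matrix.trace]
  simp only [Matrix.diag_apply, Matrix.mul_apply, Matrix.transpose_apply]
  rw [Finset.sum_comm]
  congr 1; ext i; congr 1; ext j
  rw [Real.rpow_two, Real.norm_eq_abs, sq_abs, sq]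

lemma frob_nonneg {n p : ℕ} (A : Matrix (Fin n) (Fin p) ℝ) : 0 ≤ frob A :=
  Real.sqrt_nonneg _

lemma frob_transpose {n p : ℕ} (A : Matrix (Fin n) (Fin p) ℝ) : frob Aᵀ = frob A := by
  rw [frob_eq_norm, frob_eq_norm, Matrix.frobenius_norm_transpose]

lemma frob_add_le {n p : ℕ} (A B : Matrix (Fin n) (Fin p) ℝ) :
    frob (A + B) ≤ frob A + frob B := by
  rw [frob_eq_norm, frob_eq_norm, frob_eq_norm]; exact norm_add_le _ _

lemma frob_mul_le {p : ℕ} (A B : Matrix (Fin p) (Fin p) ℝ) :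
    frob (A * B) ≤ frob A * frob B := by
  rw [frob_eq_norm, frob_eq_norm, frob_eq_norm]; exact Matrix.frobenius_norm_mul A B

lemma frob_smul {n p : ℕ} (c : ℝ) (hc : 0 ≤ c) (A : Matrix (Fin n) (Fin p) ℝ) :
    frob (c • A) = c * frob A := by
  rw [frob, frob, Matrix.transpose_smul, Matrix.smul_mul, Matrix.mul_smul, smul_smul,
    Matrix.trace_smul, smul_eq_mul, Real.sqrt_mul (mul_self_nonneg c),
    Real.sqrt_mul_self hc]

lemma psd_tmul {m p : ℕ} (A : Matrix (Fin m) (Fin p) ℝ) : (Aᵀ * A).PosSemidef := by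
  rw [← Matrix.conjTranspose_eq_transpose_of_trivial]
  exact Matrix.posSemidef_conjTranspose_mul_self A

lemma psd_smul {p : ℕ} {c : ℝ} (hc : 0 ≤ c) {P : Matrix (Fin p) (Fin p) ℝ}
    (hP : P.PosSemidef) : (c • P).PosSemidef := by
  refine Matrix.PosSemidef.of_dotProduct_mulVec_nonneg ?_ fun x => ?_
  · simpa [Matrix.IsHermitian, Matrix.conjTranspose_smul] using congrArg (c • ·) hP.1.eq
  · rw [Matrix.smul_mulVec, dotProduct_smul, smul_eq_mul]
    exact mul_nonneg hc (hP.dotProduct_mulVec_nonneg x)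

lemma psd_trace_nonneg {p : ℕ} {P : Matrix (Fin p) (Fin p) ℝ} (hP : P.PosSemidef) :
    0 ≤ Matrix.trace P := by
  rw [Matrix.trace]
  refine Finset.sum_nonneg fun i _ => ?_
  have h := hP.dotProduct_mulVec_nonneg (Pi.single i 1)
  simpa [Matrix.mulVec_single, single_dotProduct] using h

lemma trace_mul_psd_nonneg {p : ℕ} {P S : Matrix (Fin p) (Fin p) ℝ}
    (hP : P.PosSemidef) (hS : S.PosSemidef) : 0 ≤ Matrix.trace (P * S) := by
  open MatrixOrder in obtain ⟨B, hB⟩ := CStarAlgebra.nonneg_iff_eq_star_mul_self.mp hP.nonneg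
  rw [hB, Matrix.mul_assoc, Matrix.trace_mul_comm]
  exact psd_trace_nonneg (hS.mul_mul_conjTranspose_same B)

lemma frob_mul_right_le {p : ℕ} (A B : Matrix (Fin p) (Fin p) ℝ)
    (h : (1 - B * Bᵀ).PosSemidef) : frob (A * B) ≤ frob A := by
  rw [frob, frob]
  apply Real.sqrt_le_sqrt
  have key : Matrix.trace (Aᵀ * A) - Matrix.trace ((A * B)ᵀ * (A * B))
      = Matrix.trace ((Aᵀ * A) * (1 - B * Bᵀ)) := by
    rw [Matrix.mul_sub, Matrix.mul_one, Matrix.trace_sub]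
    congr 1
    rw [Matrix.transpose_mul, Matrix.mul_assoc, Matrix.trace_mul_comm]
    simp only [Matrix.mul_assoc]
  have := trace_mul_psd_nonneg (psd_tmul A) h
  linarith

lemma frob_mul_left_le {p : ℕ} (A B : Matrix (Fin p) (Fin p) ℝ)
    (h : (1 - Bᵀ * B).PosSemidef) : frob (B * A) ≤ frob A := by
  have h' : (1 - Bᵀ * (Bᵀ)ᵀ).PosSemidef := by simpa [Matrix.transpose_transpose] using h
  calc frob (B * A) = frob ((B * A)ᵀ) := (frob_transpose _).symm
    _ = frob (Aᵀ * Bᵀ) := by rw [Matrix.transpose_mul]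
    _ ≤ frob Aᵀ := frob_mul_right_le Aᵀ Bᵀ h'
    _ = frob A := frob_transpose _

/-- Feasibility-error propagation for the update scheme at an approximately feasible
point: `XᵀW = Ξ_X XᵀE` and `‖Ξ_Y‖_F ≤ (1 + 2τ‖XᵀE‖_F)‖Ξ_X‖_F`. -/
theorem stmt_19 (n p : ℕ) (X E : Matrix (Fin n) (Fin p) ℝ)
    (Ξ : Matrix (Fin p) (Fin p) ℝ) (hΞ : Ξ = Xᵀ * X - 1)
    (hskew : (Xᵀ * E)ᵀ = -(Xᵀ * E))
    (W : Matrix (Fin n) (Fin p) ℝ) (hW : W = -((1 - X * Xᵀ) * E))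
    (τ : ℝ) (hτ : 0 ≤ τ)
    (J : Matrix (Fin p) (Fin p) ℝ)
    (hJ : J = 1 + (τ ^ 2 / 4) • (Wᵀ * W) + (τ / 2) • (Xᵀ * E))
    (Y : Matrix (Fin n) (Fin p) ℝ)
    (hY : Y = X * ((2 : ℝ) • J⁻¹ - 1) + τ • (W * J⁻¹)) :
    Xᵀ * W = Ξ * (Xᵀ * E) ∧
      frob (Yᵀ * Y - 1) ≤ (1 + 2 * τ * frob (Xᵀ * E)) * frob Ξ := by

  have hXW : Xᵀ * W = Ξ * (Xᵀ * E) := by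
    rw [hW, hΞ]
    simp only [Matrix.mul_neg, Matrix.sub_mul, Matrix.mul_sub, Matrix.one_mul,
      Matrix.mul_assoc]
    abel
  refine ⟨hXW, ?_⟩
  set K : Matrix (Fin p) (Fin p) ℝ := Xᵀ * E with hKdef
  -- transpose facts
  have hWWt : (Wᵀ * W)ᵀ = Wᵀ * W := by
    rw [Matrix.transpose_mul, Matrix.transpose_transpose]
  have hJt : Jᵀ = 1 + (τ ^ 2 / 4) • (Wᵀ * W) - (τ / 2) • K := by
    rw [hJ]
    simp only [Matrix.transpose_add, Matrix.transpose_smul, Matrix.transpose_one, hWWt, hskew,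
      smul_neg]
    abel
  -- invertibility of J
  set Cm : Matrix (Fin p) (Fin p) ℝ := (τ ^ 2 / 4) • (Wᵀ * W) + (τ / 2) • K with hCm
  set Dm : Matrix (Fin p) (Fin p) ℝ := (τ ^ 2 / 4) • (Wᵀ * W) - (τ / 2) • K with hDm
  have hCmt : Cmᵀ = Dm := by
    rw [hCm, hDm]
    simp only [Matrix.transpose_add, Matrix.transpose_smul, hWWt, hskew, smul_neg]
    abel
  have hDmt : Dmᵀ = Cm := by
    rw [← hCmt, Matrix.transpose_transpose]
  have hJtJ : Jᵀ * J = 1 + (τ ^ 2 / 2) • (Wᵀ * W) + Dm * Cm := by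
    rw [hJt, hJ, hCm, hDm]
    simp only [mul_add, add_mul, sub_mul, mul_sub, smul_mul_assoc, mul_smul_comm, smul_smul,
      Matrix.mul_one, Matrix.one_mul]
    module
  have hJJt : J * Jᵀ = 1 + (τ ^ 2 / 2) • (Wᵀ * W) + Cm * Dm := by
    rw [hJt, hJ, hCm, hDm]
    simp only [mul_add, add_mul, sub_mul, mul_sub, smul_mul_assoc, mul_smul_comm, smul_smul,
      Matrix.mul_one, Matrix.one_mul]
    module
  have hdet : IsUnit J.det := by
    have hpd : (Jᵀ * J).PosDef := by
      rw [hJtJ]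
      have h1 : ((1 : Matrix (Fin p) (Fin p) ℝ) + (τ ^ 2 / 2) • (Wᵀ * W)).PosDef :=
        Matrix.PosDef.one.add_posSemidef
          (psd_smul (by positivity) (psd_tmul W))
      have h2 : (Dm * Cm).PosSemidef := by
        rw [← hCmt]; exact psd_tmul Cm
      exact h1.add_posSemidef h2
    have hp := hpd.det_pos
    rw [Matrix.det_mul, Matrix.det_transpose] at hp
    exact isUnit_iff_ne_zero.mpr (by nlinarith)
  set N : Matrix (Fin p) (Fin p) ℝ := J⁻¹ with hN
  have hJN : J * N = 1 := Matrix.mul_nonsing_inv J hdet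
  have hNJ : N * J = 1 := Matrix.nonsing_inv_mul J hdet
  have hNtJt : Nᵀ * Jᵀ = 1 := by rw [← Matrix.transpose_mul, hJN, Matrix.transpose_one]
  have hJtNt : Jᵀ * Nᵀ = 1 := by rw [← Matrix.transpose_mul, hNJ, Matrix.transpose_one]
  set Q : Matrix (Fin p) (Fin p) ℝ := (2 : ℝ) • N - 1 with hQdef
  have hQt : Qᵀ = (2 : ℝ) • Nᵀ - 1 := by
    rw [hQdef, Matrix.transpose_sub, Matrix.transpose_smul, Matrix.transpose_one]
  -- the symmetric-part identity
  have hmid : (τ ^ 2) • (Wᵀ * W) = (2 : ℝ) • Jᵀ + (2 : ℝ) • J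
      - (4 : ℝ) • (1 : Matrix (Fin p) (Fin p) ℝ) := by
    rw [hJt, hJ]
    module
  -- conjugated identities
  have hNmid : (τ ^ 2) • (Nᵀ * (Wᵀ * W) * N) = (2 : ℝ) • N + (2 : ℝ) • Nᵀ
      - (4 : ℝ) • (Nᵀ * N) := by
    have e : Nᵀ * ((τ ^ 2) • (Wᵀ * W)) * N
        = Nᵀ * ((2 : ℝ) • Jᵀ + (2 : ℝ) • J - (4 : ℝ) • (1 : Matrix (Fin p) (Fin p) ℝ)) * N := by
      rw [hmid]
    rw [mul_smul_comm, smul_mul_assoc] at e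
    rw [e]
    have p1 : Nᵀ * ((2 : ℝ) • Jᵀ) * N = (2 : ℝ) • N := by
      rw [mul_smul_comm, smul_mul_assoc, hNtJt, Matrix.one_mul]
    have p2 : Nᵀ * ((2 : ℝ) • J) * N = (2 : ℝ) • Nᵀ := by
      rw [mul_smul_comm, smul_mul_assoc, Matrix.mul_assoc, hJN, Matrix.mul_one]
    have p3 : Nᵀ * ((4 : ℝ) • (1 : Matrix (Fin p) (Fin p) ℝ)) * N = (4 : ℝ) • (Nᵀ * N) := by
      rw [mul_smul_comm, smul_mul_assoc, Matrix.mul_one]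
    simp only [mul_add, add_mul, mul_sub, sub_mul] at *
    rw [← p1, ← p2, ← p3]
  have hNmid' : (τ ^ 2) • (N * (Wᵀ * W) * Nᵀ) = (2 : ℝ) • N + (2 : ℝ) • Nᵀ
      - (4 : ℝ) • (N * Nᵀ) := by
    have e : N * ((τ ^ 2) • (Wᵀ * W)) * Nᵀ
        = N * ((2 : ℝ) • Jᵀ + (2 : ℝ) • J - (4 : ℝ) • (1 : Matrix (Fin p) (Fin p) ℝ)) * Nᵀ := by
      rw [hmid]
    rw [mul_smul_comm, smul_mul_assoc] at e
    rw [e]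
    have p1 : N * ((2 : ℝ) • Jᵀ) * Nᵀ = (2 : ℝ) • N := by
      rw [mul_smul_comm, smul_mul_assoc, Matrix.mul_assoc, hJtNt, Matrix.mul_one]
    have p2 : N * ((2 : ℝ) • J) * Nᵀ = (2 : ℝ) • Nᵀ := by
      rw [mul_smul_comm, smul_mul_assoc, hNJ, Matrix.one_mul]
    have p3 : N * ((4 : ℝ) • (1 : Matrix (Fin p) (Fin p) ℝ)) * Nᵀ = (4 : ℝ) • (N * Nᵀ) := by
      rw [mul_smul_comm, smul_mul_assoc, Matrix.mul_one]
    simp only [mul_add, add_mul, mul_sub, sub_mul] at *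
    rw [← p1, ← p2, ← p3]
  have hQtQ : Qᵀ * Q = 1 - (τ ^ 2) • (Nᵀ * (Wᵀ * W) * N) := by
    rw [hQt, hQdef, hNmid]
    simp only [sub_mul, mul_sub, smul_mul_assoc, mul_smul_comm, smul_smul,
      Matrix.mul_one, Matrix.one_mul]
    module
  have hQQt : Q * Qᵀ = 1 - (τ ^ 2) • (N * (Wᵀ * W) * Nᵀ) := by
    rw [hQt, hQdef, hNmid']
    simp only [sub_mul, mul_sub, smul_mul_assoc, mul_smul_comm, smul_smul,
      Matrix.mul_one, Matrix.one_mul]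
    module
  -- PSD facts
  have psdQ : (1 - Q * Qᵀ).PosSemidef := by
    rw [hQQt, sub_sub_cancel]
    apply psd_smul (sq_nonneg τ)
    have e : N * (Wᵀ * W) * Nᵀ = (W * Nᵀ)ᵀ * (W * Nᵀ) := by
      rw [Matrix.transpose_mul, Matrix.transpose_transpose]
      simp only [Matrix.mul_assoc]
    rw [e]; exact psd_tmul _
  have psdQ' : (1 - (Qᵀ)ᵀ * Qᵀ).PosSemidef := by
    simpa [Matrix.transpose_transpose] using psdQ
  have psdN : (1 - N * Nᵀ).PosSemidef := by
    have e0 : N * (J * Jᵀ) * Nᵀ = 1 := by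
      rw [← Matrix.mul_assoc, hNJ, Matrix.one_mul, hJtNt]
    have e1 : (1 : Matrix (Fin p) (Fin p) ℝ) - N * Nᵀ
        = (τ ^ 2 / 2) • ((W * Nᵀ)ᵀ * (W * Nᵀ)) + (Dm * Nᵀ)ᵀ * (Dm * Nᵀ) := by
      have e2 : N * (J * Jᵀ) * Nᵀ - N * Nᵀ
          = (τ ^ 2 / 2) • (N * (Wᵀ * W) * Nᵀ) + (N * Cm) * (Dm * Nᵀ) := by
        rw [hJJt]
        simp only [mul_add, add_mul, mul_sub, sub_mul, mul_smul_comm, smul_mul_assoc,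
          Matrix.mul_one, Matrix.one_mul, Matrix.mul_assoc]
        module
      rw [e0] at e2
      have f1 : N * (Wᵀ * W) * Nᵀ = (W * Nᵀ)ᵀ * (W * Nᵀ) := by
        rw [Matrix.transpose_mul, Matrix.transpose_transpose]
        simp only [Matrix.mul_assoc]
      have f2 : N * Cm = (Dm * Nᵀ)ᵀ := by
        rw [Matrix.transpose_mul, Matrix.transpose_transpose, hDmt]
      rw [e2, f1, f2]
    rw [e1]
    exact (psd_smul (by positivity) (psd_tmul _)).add (psd_tmul _)
  -- the exact identity for Ξ_Y
  have hXtX : Xᵀ * X = 1 + Ξ := by rw [hΞ]; abel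
  have hWtX : Wᵀ * X = (Ξ * K)ᵀ := by
    rw [← hXW, Matrix.transpose_mul, Matrix.transpose_transpose]
  have hYid : Yᵀ * Y - 1 = Qᵀ * Ξ * Q + τ • (Qᵀ * (Ξ * K) * N) + τ • (Nᵀ * (Ξ * K)ᵀ * Q) := by
    have hYt : Yᵀ = Qᵀ * Xᵀ + τ • (Nᵀ * Wᵀ) := by
      rw [hY, Matrix.transpose_add, Matrix.transpose_smul, Matrix.transpose_mul,
        Matrix.transpose_mul]
    have t1 : (Qᵀ * Xᵀ) * (X * Q) = Qᵀ * Q + Qᵀ * Ξ * Q := by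
      rw [Matrix.mul_assoc, ← Matrix.mul_assoc Xᵀ X Q, hXtX]
      simp only [add_mul, mul_add, Matrix.one_mul, Matrix.mul_assoc]
    have t2 : (Qᵀ * Xᵀ) * (W * N) = Qᵀ * (Ξ * K) * N := by
      rw [Matrix.mul_assoc, ← Matrix.mul_assoc Xᵀ W N, hXW]
      simp only [Matrix.mul_assoc]
    have t3 : (Nᵀ * Wᵀ) * (X * Q) = Nᵀ * (Ξ * K)ᵀ * Q := by
      rw [Matrix.mul_assoc, ← Matrix.mul_assoc Wᵀ X Q, hWtX]
      simp only [Matrix.mul_assoc]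
    have expand : Yᵀ * Y = (Qᵀ * Xᵀ) * (X * Q) + τ • ((Qᵀ * Xᵀ) * (W * N))
        + τ • ((Nᵀ * Wᵀ) * (X * Q)) + (τ ^ 2) • (Nᵀ * (Wᵀ * W) * N) := by
      rw [hYt, hY]
      simp only [Matrix.add_mul, Matrix.mul_add, Matrix.smul_mul, Matrix.mul_smul, smul_smul,
        Matrix.mul_assoc]
      module
    rw [expand, t1, t2, t3, hQtQ]
    module
  -- the estimate
  rw [hYid]
  have b1 : frob (Qᵀ * Ξ * Q) ≤ frob Ξ :=
    le_trans (frob_mul_right_le (Qᵀ * Ξ) Q psdQ) (frob_mul_left_le Ξ Qᵀ psdQ')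
  have b2 : frob (Qᵀ * (Ξ * K) * N) ≤ frob Ξ * frob K :=
    le_trans (frob_mul_right_le (Qᵀ * (Ξ * K)) N psdN)
      (le_trans (frob_mul_left_le (Ξ * K) Qᵀ psdQ') (frob_mul_le Ξ K))
  have b3 : frob (Nᵀ * (Ξ * K)ᵀ * Q) ≤ frob Ξ * frob K := by
    have e : Nᵀ * (Ξ * K)ᵀ * Q = (Qᵀ * (Ξ * K) * N)ᵀ := by
      simp only [Matrix.transpose_mul, Matrix.transpose_transpose, Matrix.mul_assoc]
    rw [e, frob_transpose]
    exact b2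
  have tri : frob (Qᵀ * Ξ * Q + τ • (Qᵀ * (Ξ * K) * N) + τ • (Nᵀ * (Ξ * K)ᵀ * Q))
      ≤ frob (Qᵀ * Ξ * Q) + frob (τ • (Qᵀ * (Ξ * K) * N)) + frob (τ • (Nᵀ * (Ξ * K)ᵀ * Q)) :=
    le_trans (frob_add_le _ _) (add_le_add_left (frob_add_le _ _) _)
  rw [frob_smul τ hτ, frob_smul τ hτ] at tri
  have m2 : τ * frob (Qᵀ * (Ξ * K) * N) ≤ τ * (frob Ξ * frob K) :=
    mul_le_mul_of_nonneg_left b2 hτ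
  have m3 : τ * frob (Nᵀ * (Ξ * K)ᵀ * Q) ≤ τ * (frob Ξ * frob K) :=
    mul_le_mul_of_nonneg_left b3 hτ
  have : (1 + 2 * τ * frob K) * frob Ξ = frob Ξ + τ * (frob Ξ * frob K) + τ * (frob Ξ * frob K) := by
    ring
  rw [this]
  linarith
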